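/- Consider the error dynamics ė = (A(t) − KC(t)) e, where A(t) = Ā ⊗ I₃ + S(t), S(t) = −I₅ ⊗ [ω(t)]_×, C(t) = C̄ ⊗ I₃ (C̄ constant), K = K̄ ⊗ I₃, and R : ℝ → SO(3) satisfies Ṙ = R[ω]_× with T(t) = I₅ ⊗ R(t). Then η(t) := T(t) e(t) satisfies the linear time-invariant dynamics η̇ = ((Ā − K̄C̄) ⊗ I₃) η. In particular, if Ā − K̄C̄ is Hurwitz, then e(t) → 0 exponentially for any initial condition. -/

import Mathlib

open Matrix
open scoped Kronecker

/-- The skew-symmetric (cross-product) matrix of `x ∈ ℝ³`. -/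
def skew (x : Fin 3 → ℝ) : Matrix (Fin 3) (Fin 3) ℝ :=
  !![0, -x 2, x 1; x 2, 0, -x 0; -x 1, x 0, 0]

/-- A real square matrix is Hurwitz if all its (complex) eigenvalues have
negative real part. -/
def Hurwitz {n : Type*} [Fintype n] [DecidableEq n] (M : Matrix n n ℝ) : Prop :=
  ∀ μ : ℂ, μ ∈ spectrum ℂ (M.map (algebraMap ℝ ℂ)) → μ.re < 0


open NormedSpace

attribute [local instance] Matrix.linftyOpNormedRing Matrix.linftyOpNormedAlgebra

private lemma pow_mul_exp_le {a t : ℝ} (ha : 0 < a) (ht : 0 ≤ t) (j : ℕ) :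
    t ^ j * Real.exp (-(a * t)) ≤ (j.factorial : ℝ) / a ^ j := by
  have h1 : (a * t) ^ j / (j.factorial : ℝ) ≤ Real.exp (a * t) :=
    Real.pow_div_factorial_le_exp (a * t) (by positivity) j
  have hfpos : (0:ℝ) < (j.factorial : ℝ) := by positivity
  have hapos : (0:ℝ) < a ^ j := by positivity
  have hepos : (0:ℝ) < Real.exp (a * t) := Real.exp_pos _
  rw [div_le_iff₀ hfpos, mul_pow] at h1
  rw [Real.exp_neg, le_div_iff₀ hapos]
  have h2 : a ^ j * t ^ j * (Real.exp (a*t))⁻¹ ≤ (j.factorial : ℝ) := by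
    calc a ^ j * t ^ j * (Real.exp (a*t))⁻¹
        ≤ (Real.exp (a*t) * (j.factorial : ℝ)) * (Real.exp (a*t))⁻¹ :=
          mul_le_mul_of_nonneg_right h1 (inv_nonneg.2 hepos.le)
      _ = (j.factorial : ℝ) := by field_simp
  calc t ^ j * (Real.exp (a*t))⁻¹ * a ^ j = a ^ j * t ^ j * (Real.exp (a*t))⁻¹ := by ring
    _ ≤ (j.factorial : ℝ) := h2

/-- mulVec as an ℝ-continuous-linear map in the matrix argument. -/
noncomputable def mulVecCLM {n : Type*} [Fintype n] (v : n → ℂ) :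
    Matrix n n ℂ →L[ℝ] (n → ℂ) :=
  LinearMap.toContinuousLinearMap
    { toFun := fun A => A *ᵥ v
      map_add' := fun A B => Matrix.add_mulVec A B v
      map_smul' := fun r A => by
        ext i
        simp [Matrix.mulVec, dotProduct, Finset.smul_sum, smul_mul_assoc, mul_assoc] }

@[simp] lemma mulVecCLM_apply {n : Type*} [Fintype n] (v : n → ℂ) (A : Matrix n n ℂ) :
    mulVecCLM v A = A *ᵥ v := rfl

section GenBound
variable {n : Type*} [Fintype n] [DecidableEq n]

lemma exp_smul_mulVec_gen (Mc : Matrix n n ℂ) (μ : ℂ) (v : n → ℂ) (d : ℕ)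
    (hv : ((Mc - μ • (1 : Matrix n n ℂ)) ^ d) *ᵥ v = 0) (t : ℝ) :
    exp (t • Mc) *ᵥ v =
      Complex.exp ((t : ℂ) * μ) •
        ∑ j ∈ Finset.range d,
          (((j.factorial : ℝ))⁻¹ * t ^ j) • ((Mc - μ • (1 : Matrix n n ℂ)) ^ j *ᵥ v) := by
  set N : Matrix n n ℂ := Mc - μ • (1 : Matrix n n ℂ) with hN
  have hz : ((t : ℂ) * μ) • (1 : Matrix n n ℂ) = t • (μ • (1 : Matrix n n ℂ)) := by
    rw [← smul_smul]
    norm_num [Complex.coe_smul]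
  have hsplit : t • Mc = ((t : ℂ) * μ) • (1 : Matrix n n ℂ) + t • N := by
    rw [hz, hN, smul_sub]
    abel
  have hcomm : Commute (((t : ℂ) * μ) • (1 : Matrix n n ℂ)) (t • N) :=
    ((Commute.one_left N).smul_left _).smul_right _
  have hscal : exp (((t : ℂ) * μ) • (1 : Matrix n n ℂ))
      = Complex.exp ((t : ℂ) * μ) • (1 : Matrix n n ℂ) := by
    rw [← Algebra.algebraMap_eq_smul_one]
    erw [← map_exp (algebraMap ℂ (Matrix n n ℂ)) (continuous_algebraMap _ _)]
    have : exp ((t : ℂ) * μ) = Complex.exp ((t : ℂ) * μ) := by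
      rw [← Complex.exp_eq_exp_ℂ]
    rw [this, Algebra.algebraMap_eq_smul_one]
  have hexpN : exp (t • N) *ᵥ v =
      ∑ j ∈ Finset.range d, (((j.factorial : ℝ))⁻¹ * t ^ j) • (N ^ j *ᵥ v) := by
    have hsum : Summable fun j : ℕ => ((j.factorial : ℝ))⁻¹ • (t • N) ^ j :=
      expSeries_summable' (𝕂 := ℝ) (t • N)
    have h1 : exp (t • N) *ᵥ v
        = ∑' j : ℕ, (((j.factorial : ℝ))⁻¹ • (t • N) ^ j) *ᵥ v := by
      rw [exp_eq_tsum ℝ]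
      exact ((mulVecCLM v).map_tsum hsum)
    rw [h1]
    have hterm : ∀ j : ℕ, (((j.factorial : ℝ))⁻¹ • (t • N) ^ j) *ᵥ v
        = (((j.factorial : ℝ))⁻¹ * t ^ j) • (N ^ j *ᵥ v) := by
      intro j
      rw [smul_pow, smul_smul, Matrix.smul_mulVec]
    have hvanish : ∀ j ∉ Finset.range d,
        (((j.factorial : ℝ))⁻¹ • (t • N) ^ j) *ᵥ v = 0 := by
      intro j hj
      rw [Finset.mem_range, not_lt] at hj
      have : N ^ j *ᵥ v = 0 := by
        have : N ^ j = N ^ (j - d) * N ^ d := by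
          rw [← pow_add]
          congr 1
          omega
        rw [this, ← Matrix.mulVec_mulVec, hv, Matrix.mulVec_zero]
      rw [hterm j, this, smul_zero]
    rw [tsum_eq_sum hvanish]
    exact Finset.sum_congr rfl fun j _ => hterm j
  rw [hsplit, Matrix.exp_add_of_commute _ _ hcomm, hscal, smul_mul_assoc, one_mul,
    Matrix.smul_mulVec, hexpN]

end GenBound

section Bounds
variable {n : Type*} [Fintype n] [DecidableEq n]

lemma gen_vector_bound (Mc : Matrix n n ℂ) {lam : ℝ} (hlam : 0 < lam)
    (μ : ℂ) (hμ : μ.re ≤ -(2 * lam)) (v : n → ℂ) (d : ℕ)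
    (hv : ((Mc - μ • (1 : Matrix n n ℂ)) ^ d) *ᵥ v = 0) :
    ∃ c : ℝ, 0 ≤ c ∧ ∀ t : ℝ, 0 ≤ t →
      ‖exp (t • Mc) *ᵥ v‖ ≤ c * Real.exp (-(lam * t)) := by
  set N : Matrix n n ℂ := Mc - μ • (1 : Matrix n n ℂ) with hN
  refine ⟨∑ j ∈ Finset.range d, (lam ^ j)⁻¹ * ‖N ^ j *ᵥ v‖, ?_, ?_⟩
  · exact Finset.sum_nonneg fun j _ => by positivity
  intro t ht
  rw [exp_smul_mulVec_gen Mc μ v d hv t, norm_smul]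
  have habs : ‖Complex.exp ((t : ℂ) * μ)‖ = Real.exp (t * μ.re) := by
    rw [Complex.norm_exp]
    congr 1
    simp [Complex.mul_re]
  rw [habs]
  calc Real.exp (t * μ.re) * ‖∑ j ∈ Finset.range d,
        (((j.factorial : ℝ))⁻¹ * t ^ j) • (N ^ j *ᵥ v)‖
      ≤ Real.exp (t * μ.re) * ∑ j ∈ Finset.range d,
          ((j.factorial : ℝ))⁻¹ * t ^ j * ‖N ^ j *ᵥ v‖ := by
        refine mul_le_mul_of_nonneg_left ?_ (Real.exp_nonneg _)
        refine (norm_sum_le _ _).trans (Finset.sum_le_sum fun j _ => ?_)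
        rw [norm_smul, Real.norm_eq_abs, abs_mul, abs_of_nonneg (by positivity),
          abs_of_nonneg (by positivity)]
    _ = ∑ j ∈ Finset.range d,
          ((j.factorial : ℝ))⁻¹ * ‖N ^ j *ᵥ v‖ * (t ^ j * Real.exp (t * μ.re)) := by
        rw [Finset.mul_sum]; exact Finset.sum_congr rfl fun j _ => by ring
    _ ≤ ∑ j ∈ Finset.range d,
          ((j.factorial : ℝ))⁻¹ * ‖N ^ j *ᵥ v‖ *
            (((j.factorial : ℝ) / lam ^ j) * Real.exp (-(lam * t))) := by
        refine Finset.sum_le_sum fun j _ => ?_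
        refine mul_le_mul_of_nonneg_left ?_ (by positivity)
        have h1 : t ^ j * Real.exp (t * μ.re)
            ≤ t ^ j * Real.exp (-(2 * lam) * t) := by
          refine mul_le_mul_of_nonneg_left (Real.exp_le_exp.2 ?_) (by positivity)
          calc t * μ.re ≤ t * (-(2 * lam)) :=
                mul_le_mul_of_nonneg_left hμ ht
            _ = -(2 * lam) * t := by ring
        refine h1.trans ?_
        have h2 : Real.exp (-(2 * lam) * t) = Real.exp (-(lam * t)) * Real.exp (-(lam * t)) := by
          rw [← Real.exp_add]; ring_nf
        rw [h2, ← mul_assoc]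
        refine mul_le_mul_of_nonneg_right ?_ (Real.exp_nonneg _)
        exact pow_mul_exp_le hlam ht j
    _ = (∑ j ∈ Finset.range d, (lam ^ j)⁻¹ * ‖N ^ j *ᵥ v‖) * Real.exp (-(lam * t)) := by
        rw [Finset.sum_mul]
        refine Finset.sum_congr rfl fun j _ => ?_
        have hf : ((j.factorial : ℝ)) ≠ 0 := by positivity
        field_simp

end Bounds

section Decay
variable {n : Type*} [Fintype n] [DecidableEq n]

lemma cplx_decay (Mc : Matrix n n ℂ) (hspec : ∀ μ ∈ spectrum ℂ Mc, μ.re < 0) :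
    ∃ lam : ℝ, 0 < lam ∧ ∀ w : n → ℂ, ∃ c : ℝ, 0 ≤ c ∧ ∀ t : ℝ, 0 ≤ t →
      ‖exp (t • Mc) *ᵥ w‖ ≤ c * Real.exp (-(lam * t)) := by
  -- choose the rate from the (finite) spectrum
  have hfin : (spectrum ℂ Mc).Finite := Matrix.finite_spectrum Mc
  obtain ⟨lam, hlam, hgap⟩ :
      ∃ lam : ℝ, 0 < lam ∧ ∀ μ ∈ spectrum ℂ Mc, μ.re ≤ -(2 * lam) := by
    by_cases hs : (hfin.toFinset.image Complex.re).Nonempty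
    · refine ⟨-((hfin.toFinset.image Complex.re).max' hs) / 2, ?_, ?_⟩
      · obtain ⟨μ, hμs, hμe⟩ :=
          Finset.mem_image.1 ((hfin.toFinset.image Complex.re).max'_mem hs)
        rw [Set.Finite.mem_toFinset] at hμs
        have := hspec μ hμs
        rw [hμe] at this
        linarith
      · intro μ hμ
        have hmem : μ.re ∈ hfin.toFinset.image Complex.re :=
          Finset.mem_image.2 ⟨μ, (Set.Finite.mem_toFinset hfin).2 hμ, rfl⟩
        have := Finset.le_max' _ _ hmem
        linarith
    · refine ⟨1, one_pos, fun μ hμ => absurd ?_ hs⟩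
      exact ⟨μ.re, Finset.mem_image.2 ⟨μ, (Set.Finite.mem_toFinset hfin).2 hμ, rfl⟩⟩
  refine ⟨lam, hlam, fun w => ?_⟩
  -- decompose w into generalized eigenvectors
  set f : Module.End ℂ (n → ℂ) := Matrix.toLinAlgEquiv' Mc with hf
  have htop := Module.End.iSup_maxGenEigenspace_eq_top f
  have hw : w ∈ ⨆ μ, f.maxGenEigenspace μ := htop ▸ Submodule.mem_top
  rw [Submodule.mem_iSup_iff_exists_finsupp] at hw
  obtain ⟨a, ha, hsum⟩ := hw
  have hb : ∀ μ ∈ a.support, ∃ c : ℝ, 0 ≤ c ∧ ∀ t : ℝ, 0 ≤ t →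
      ‖exp (t • Mc) *ᵥ a μ‖ ≤ c * Real.exp (-(lam * t)) := by
    intro μ hμs
    have hane : a μ ≠ 0 := Finsupp.mem_support_iff.1 hμs
    obtain ⟨d, hd⟩ := (Module.End.mem_maxGenEigenspace f μ (a μ)).1 (ha μ)
    -- μ is in the spectrum
    have hμspec : μ ∈ spectrum ℂ Mc := by
      have hgen : f.HasGenEigenvalue μ d := by
        rw [Module.End.hasGenEigenvalue_iff, Submodule.ne_bot_iff]
        exact ⟨a μ, Module.End.mem_genEigenspace_nat.2 hd, hane⟩
      have hev : f.HasEigenvalue μ := Module.End.hasEigenvalue_of_hasGenEigenvalue hgen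
      have := Module.End.hasEigenvalue_iff_mem_spectrum.1 hev
      rwa [hf, AlgEquiv.spectrum_eq Matrix.toLinAlgEquiv' Mc] at this
    -- translate the kernel condition to matrices
    have hker : ((Mc - μ • (1 : Matrix n n ℂ)) ^ d) *ᵥ a μ = 0 := by
      have h1 : f - μ • 1 = Matrix.toLinAlgEquiv' (Mc - μ • (1 : Matrix n n ℂ)) := by
        rw [hf, map_sub, _root_.map_smul, _root_.map_one]
      have h2 : (f - μ • 1) ^ d = Matrix.toLinAlgEquiv' ((Mc - μ • (1 : Matrix n n ℂ)) ^ d) := by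
        rw [h1, map_pow]
      rw [h2] at hd
      rwa [Matrix.toLinAlgEquiv'_apply] at hd
    exact gen_vector_bound Mc hlam μ (hgap μ hμspec) (a μ) d hker
  choose! cf hcf0 hcf using hb
  refine ⟨∑ μ ∈ a.support, cf μ, Finset.sum_nonneg fun μ hμ => hcf0 μ hμ, fun t ht => ?_⟩
  have hws : w = ∑ μ ∈ a.support, a μ := by rw [← hsum]; rfl
  have hmv : exp (t • Mc) *ᵥ w = ∑ μ ∈ a.support, exp (t • Mc) *ᵥ a μ := by
    rw [hws, ← Matrix.mulVecLin_apply, map_sum]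
    simp [Matrix.mulVecLin_apply]
  rw [hmv]
  calc ‖∑ μ ∈ a.support, exp (t • Mc) *ᵥ a μ‖
      ≤ ∑ μ ∈ a.support, ‖exp (t • Mc) *ᵥ a μ‖ := norm_sum_le _ _
    _ ≤ ∑ μ ∈ a.support, cf μ * Real.exp (-(lam * t)) :=
        Finset.sum_le_sum fun μ hμ => hcf μ hμ t ht
    _ = (∑ μ ∈ a.support, cf μ) * Real.exp (-(lam * t)) := by rw [Finset.sum_mul]

end Decay

section Real
variable {n : Type*} [Fintype n] [DecidableEq n]

lemma norm_mapC (A : Matrix n n ℝ) :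
    ‖A.map (algebraMap ℝ ℂ)‖ = ‖A‖ := by
  rw [Matrix.linfty_opNorm_def, Matrix.linfty_opNorm_def]
  congr 1
  refine Finset.sup_congr rfl fun i _ => ?_
  refine Finset.sum_congr rfl fun j _ => ?_
  simp [Matrix.map_apply]

lemma continuous_mapC :
    Continuous fun A : Matrix n n ℝ => A.map (algebraMap ℝ ℂ) := by
  have : (fun A : Matrix n n ℝ => A.map (algebraMap ℝ ℂ))
      = ⇑((algebraMap ℝ ℂ).mapMatrix (m := n)) := by
    funext A; rfl
  rw [this]
  refine AddMonoidHomClass.continuous_of_bound _ 1 fun A => ?_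
  rw [one_mul]
  exact le_of_eq (norm_mapC A)

lemma mapC_exp (M : Matrix n n ℝ) (t : ℝ) :
    (exp (t • M)).map (algebraMap ℝ ℂ) = exp (t • M.map (algebraMap ℝ ℂ)) := by
  have h1 : (exp (t • M)).map (algebraMap ℝ ℂ)
      = (algebraMap ℝ ℂ).mapMatrix (exp (t • M)) := rfl
  erw [h1, map_exp ((algebraMap ℝ ℂ).mapMatrix (m := n)) continuous_mapC]
  congr 1
  ext i j
  simp [RingHom.mapMatrix_apply, Matrix.map_apply, Complex.real_smul]

lemma mapC_mulVec (B : Matrix n n ℝ) (v : n → ℝ) :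
    (B.map (algebraMap ℝ ℂ)) *ᵥ (fun j => (v j : ℂ)) = fun i => ((B *ᵥ v) i : ℂ) := by
  funext i
  simp only [Matrix.mulVec, dotProduct, Matrix.map_apply]
  push_cast
  rfl

lemma norm_coe_vec (v : n → ℝ) : ‖(fun i => (v i : ℂ))‖ = ‖v‖ := by
  rw [Pi.norm_def, Pi.norm_def]
  congr 1
  exact Finset.sup_congr rfl fun i _ => by simp

lemma real_decay (M : Matrix n n ℝ)
    (hH : ∀ μ : ℂ, μ ∈ spectrum ℂ (M.map (algebraMap ℝ ℂ)) → μ.re < 0) :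
    ∃ c : ℝ, 0 < c ∧ ∃ lam : ℝ, 0 < lam ∧ ∀ t : ℝ, 0 ≤ t → ∀ v : n → ℝ,
      ‖exp (t • M) *ᵥ v‖ ≤ c * Real.exp (-(lam * t)) * ‖v‖ := by
  set Mc := M.map (algebraMap ℝ ℂ) with hMc
  obtain ⟨lam, hlam, hptw⟩ := cplx_decay Mc hH
  choose cf hcf0 hcf using fun k : n => hptw (Pi.single k (1 : ℂ))
  have hsumnn : 0 ≤ ∑ k : n, cf k := Finset.sum_nonneg fun k _ => hcf0 k
  refine ⟨(∑ k : n, cf k) + 1, by positivity, lam, hlam, fun t ht v => ?_⟩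
  have key : ‖exp (t • M) *ᵥ v‖ = ‖exp (t • Mc) *ᵥ (fun i => (v i : ℂ))‖ := by
    calc ‖exp (t • M) *ᵥ v‖
        = ‖(fun i => (((exp (t • M)) *ᵥ v) i : ℂ))‖ := (norm_coe_vec _).symm
      _ = ‖(exp (t • M)).map (algebraMap ℝ ℂ) *ᵥ (fun j => (v j : ℂ))‖ := by
          rw [mapC_mulVec]
      _ = ‖exp (t • Mc) *ᵥ (fun i => (v i : ℂ))‖ := by rw [mapC_exp]
  rw [key]
  have hdecomp : (fun i => (v i : ℂ)) = ∑ k : n, ((v k : ℂ) • (Pi.single k (1 : ℂ) : n → ℂ)) := by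
    funext i
    rw [Finset.sum_apply]
    simp [Pi.single_apply, mul_ite, Finset.sum_ite_eq']
  have hsplit : exp (t • Mc) *ᵥ (fun i => (v i : ℂ))
      = ∑ k : n, (v k : ℂ) • (exp (t • Mc) *ᵥ (Pi.single k (1 : ℂ) : n → ℂ)) := by
    rw [hdecomp, ← Matrix.mulVecLin_apply, map_sum]
    simp [Matrix.mulVecLin_apply]
  rw [hsplit]
  calc ‖∑ k : n, (v k : ℂ) • (exp (t • Mc) *ᵥ (Pi.single k (1 : ℂ) : n → ℂ))‖
      ≤ ∑ k : n, ‖(v k : ℂ) • (exp (t • Mc) *ᵥ (Pi.single k (1 : ℂ) : n → ℂ))‖ := norm_sum_le _ _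
    _ ≤ ∑ k : n, ‖v‖ * (cf k * Real.exp (-(lam * t))) := by
        refine Finset.sum_le_sum fun k _ => ?_
        rw [norm_smul]
        have h1 : ‖(v k : ℂ)‖ ≤ ‖v‖ := by
          rw [Complex.norm_real]
          exact norm_le_pi_norm v k
        exact mul_le_mul h1 (hcf k t ht) (norm_nonneg _) (norm_nonneg _)
    _ = (∑ k : n, cf k) * Real.exp (-(lam * t)) * ‖v‖ := by
        rw [Finset.sum_mul, Finset.sum_mul]
        exact Finset.sum_congr rfl fun k _ => by ring
    _ ≤ ((∑ k : n, cf k) + 1) * Real.exp (-(lam * t)) * ‖v‖ := by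
        have : (0:ℝ) ≤ Real.exp (-(lam * t)) * ‖v‖ := by positivity
        nlinarith

end Real

section ODE
variable {n : Type*} [Fintype n] [DecidableEq n]

noncomputable def entryCLM (i j : n) : Matrix n n ℝ →L[ℝ] ℝ :=
  LinearMap.toContinuousLinearMap
    { toFun := fun A => A i j
      map_add' := fun _ _ => rfl
      map_smul' := fun _ _ => rfl }

lemma exp_entry_hasDerivAt (M : Matrix n n ℝ) (i j : n) (t : ℝ) :
    HasDerivAt (fun s : ℝ => exp (s • M) i j) ((exp (t • M) * M) i j) t := by
  have h := hasDerivAt_exp_smul_const (𝕂 := ℝ) M t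
  exact (entryCLM i j).hasFDerivAt.comp_hasDerivAt t h

lemma exp_neg_entry_hasDerivAt (M : Matrix n n ℝ) (i j : n) (t : ℝ) :
    HasDerivAt (fun s : ℝ => exp ((-s) • M) i j)
      ((-(exp ((-t) • M) * M)) i j) t := by
  have h1 := exp_entry_hasDerivAt M i j (-t)
  have h2 : HasDerivAt (fun s : ℝ => -s) (-1) t := (hasDerivAt_id t).neg
  have := HasDerivAt.comp t h1 h2
  simpa [Matrix.neg_apply, mul_comm, Function.comp_def] using this

lemma ode_unique (M : Matrix n n ℝ) (x : ℝ → n → ℝ)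
    (hx : ∀ t i, HasDerivAt (fun s => x s i) ((M *ᵥ x t) i) t) (t : ℝ) :
    x t = exp (t • M) *ᵥ x 0 := by
  set y : ℝ → n → ℝ := fun s => exp ((-s) • M) *ᵥ x s with hy
  have hyd : ∀ (s : ℝ) (i : n), HasDerivAt (fun u => y u i) 0 s := by
    intro s i
    have hterm : ∀ j : n, HasDerivAt (fun u => exp ((-u) • M) i j * x u j)
        ((-(exp ((-s) • M) * M)) i j * x s j
          + exp ((-s) • M) i j * ((M *ᵥ x s) j)) s :=
      fun j => (exp_neg_entry_hasDerivAt M i j s).mul (hx s j)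
    have hsum := HasDerivAt.fun_sum (u := Finset.univ) (fun j _ => hterm j)
    have hfun : (fun u => ∑ j : n, exp ((-u) • M) i j * x u j) = fun u => y u i := by
      funext u
      simp [hy, Matrix.mulVec, dotProduct]
    have hval : ∑ j : n, ((-(exp ((-s) • M) * M)) i j * x s j
        + exp ((-s) • M) i j * ((M *ᵥ x s) j)) = 0 := by
      rw [Finset.sum_add_distrib]
      have e1 : ∑ j : n, (-(exp ((-s) • M) * M)) i j * x s j
          = ((-(exp ((-s) • M) * M)) *ᵥ x s) i := rfl
      have e2 : ∑ j : n, exp ((-s) • M) i j * ((M *ᵥ x s) j)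
          = (exp ((-s) • M) *ᵥ (M *ᵥ x s)) i := rfl
      rw [e1, e2, Matrix.neg_mulVec, ← Matrix.mulVec_mulVec]
      simp
    rw [hfun] at hsum
    rwa [hval] at hsum
  have hconst : ∀ s : ℝ, y s = y 0 := by
    intro s
    funext i
    exact is_const_of_deriv_eq_zero (fun u => (hyd u i).differentiableAt)
      (fun u => (hyd u i).deriv) s 0
  have hy0 : y 0 = x 0 := by
    simp [hy]
  have hyt := hconst t
  rw [hy0] at hyt
  have hinv : exp (t • M) * exp ((-t) • M) = 1 := by
    rw [← Matrix.exp_add_of_commute _ _ (((Commute.refl M).smul_left t).smul_right (-t)),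
      ← add_smul]
    simp
  calc x t = (1 : Matrix n n ℝ) *ᵥ x t := by rw [Matrix.one_mulVec]
    _ = (exp (t • M) * exp ((-t) • M)) *ᵥ x t := by rw [hinv]
    _ = exp (t • M) *ᵥ (exp ((-t) • M) *ᵥ x t) := by rw [← Matrix.mulVec_mulVec]
    _ = exp (t • M) *ᵥ x 0 := by rw [show exp ((-t) • M) *ᵥ x t = x 0 from hyt]

end ODE

section Kron
variable {p q : Type*} [Fintype p] [DecidableEq p] [Fintype q] [DecidableEq q]

lemma sub_kron {α : Type*} [Ring α] (A B : Matrix p p α) (C : Matrix q q α) :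
    (A - B) ⊗ₖ C = A ⊗ₖ C - B ⊗ₖ C := by
  ext ⟨i1, i2⟩ ⟨j1, j2⟩
  simp [Matrix.kronecker_apply, sub_mul]

lemma scalar_kron (μ : ℂ) :
    algebraMap ℂ (Matrix (p × q) (p × q) ℂ) μ
      = (algebraMap ℂ (Matrix p p ℂ) μ) ⊗ₖ (1 : Matrix q q ℂ) := by
  rw [Algebra.algebraMap_eq_smul_one, Algebra.algebraMap_eq_smul_one,
    Matrix.smul_kronecker, Matrix.one_kronecker_one]

lemma spectrum_kron_one_subset (X : Matrix p p ℂ) (μ : ℂ)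
    (hμ : μ ∈ spectrum ℂ (X ⊗ₖ (1 : Matrix q q ℂ))) : μ ∈ spectrum ℂ X := by
  rw [spectrum.mem_iff] at hμ ⊢
  intro hunit
  apply hμ
  have hdet : IsUnit (algebraMap ℂ (Matrix p p ℂ) μ - X).det :=
    (Matrix.isUnit_iff_isUnit_det _).1 hunit
  have key : algebraMap ℂ (Matrix (p × q) (p × q) ℂ) μ - X ⊗ₖ (1 : Matrix q q ℂ)
      = (algebraMap ℂ (Matrix p p ℂ) μ - X) ⊗ₖ (1 : Matrix q q ℂ) := by
    rw [scalar_kron, ← sub_kron]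
  rw [key]
  refine (Matrix.isUnit_iff_isUnit_det _).2 ?_
  rw [Matrix.det_kronecker]
  simp only [Matrix.det_one, one_pow, mul_one]
  exact hdet.pow _

lemma mapC_kron (X : Matrix p p ℝ) :
    (X ⊗ₖ (1 : Matrix q q ℝ)).map (algebraMap ℝ ℂ)
      = (X.map (algebraMap ℝ ℂ)) ⊗ₖ (1 : Matrix q q ℂ) := by
  ext ⟨i1, i2⟩ ⟨j1, j2⟩
  simp only [Matrix.map_apply, Matrix.kronecker_apply, Matrix.one_apply]
  split <;> simp

end Kron

section VecBound

lemma mulVec_pi_norm_le {m' n' : Type*} [Fintype m'] [Fintype n'] [Nonempty m']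
    (A : Matrix m' n' ℝ) (hA : ∀ i j, |A i j| ≤ 1) (x : n' → ℝ) :
    ‖A *ᵥ x‖ ≤ (Fintype.card n' : ℝ) * ‖x‖ := by
  rw [pi_norm_le_iff_of_nonneg (by positivity)]
  intro i
  rw [Real.norm_eq_abs]
  show |∑ j, A i j * x j| ≤ _
  calc |∑ j, A i j * x j| ≤ ∑ j, |A i j * x j| := Finset.abs_sum_le_sum_abs _ _
    _ ≤ ∑ _j : n', ‖x‖ := by
        refine Finset.sum_le_sum fun j _ => ?_
        rw [abs_mul]
        calc |A i j| * |x j| ≤ 1 * |x j| :=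
              mul_le_mul_of_nonneg_right (hA i j) (abs_nonneg _)
          _ = |x j| := one_mul _
          _ ≤ ‖x‖ := by rw [← Real.norm_eq_abs]; exact norm_le_pi_norm x j
    _ = (Fintype.card n' : ℝ) * ‖x‖ := by
        rw [Finset.sum_const, Finset.card_univ, nsmul_eq_mul]

end VecBound

/-- The transformed error `η = T e` obeys the LTI dynamics
`η̇ = ((Ā − K̄C̄) ⊗ I₃) η`; if `Ā − K̄C̄` is Hurwitz then `e(t) → 0` exponentially. -/
theorem error_dynamics_constant_gain {k : ℕ}
    (Ab : Matrix (Fin 5) (Fin 5) ℝ)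
    (Kb : Matrix (Fin 5) (Fin k) ℝ) (Cb : Matrix (Fin k) (Fin 5) ℝ)
    (ω : ℝ → Fin 3 → ℝ) (hω : Continuous ω)
    (R : ℝ → Matrix (Fin 3) (Fin 3) ℝ)
    (hSO : ∀ t, R t * (R t)ᵀ = 1 ∧ (R t)ᵀ * R t = 1 ∧ (R t).det = 1)
    (hR : ∀ t i j, HasDerivAt (fun s => R s i j) ((R t * skew (ω t)) i j) t)
    (S : ℝ → Matrix (Fin 5 × Fin 3) (Fin 5 × Fin 3) ℝ)
    (hS : ∀ t, S t = -((1 : Matrix (Fin 5) (Fin 5) ℝ) ⊗ₖ skew (ω t)))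
    (A : ℝ → Matrix (Fin 5 × Fin 3) (Fin 5 × Fin 3) ℝ)
    (hA : ∀ t, A t = Ab ⊗ₖ (1 : Matrix (Fin 3) (Fin 3) ℝ) + S t)
    (K : Matrix (Fin 5 × Fin 3) (Fin k × Fin 3) ℝ)
    (hK : K = Kb ⊗ₖ (1 : Matrix (Fin 3) (Fin 3) ℝ))
    (C : Matrix (Fin k × Fin 3) (Fin 5 × Fin 3) ℝ)
    (hC : C = Cb ⊗ₖ (1 : Matrix (Fin 3) (Fin 3) ℝ))
    (T : ℝ → Matrix (Fin 5 × Fin 3) (Fin 5 × Fin 3) ℝ)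
    (hT : ∀ t, T t = (1 : Matrix (Fin 5) (Fin 5) ℝ) ⊗ₖ R t)
    (e : ℝ → Fin 5 × Fin 3 → ℝ)
    (he : ∀ t i, HasDerivAt (fun s => e s i) (((A t - K * C) *ᵥ e t) i) t)
    (η : ℝ → Fin 5 × Fin 3 → ℝ) (hη : ∀ t, η t = T t *ᵥ e t) :
    (∀ t i, HasDerivAt (fun s => η s i)
        ((((Ab - Kb * Cb) ⊗ₖ (1 : Matrix (Fin 3) (Fin 3) ℝ)) *ᵥ η t) i) t) ∧
      (Hurwitz (Ab - Kb * Cb) →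
        ∃ c > (0 : ℝ), ∃ lam > (0 : ℝ), ∀ t ≥ (0 : ℝ),
          ‖e t‖ ≤ c * Real.exp (-lam * t) * ‖e 0‖) := by
  have hdyn : ∀ t i, HasDerivAt (fun s => η s i)
      ((((Ab - Kb * Cb) ⊗ₖ (1 : Matrix (Fin 3) (Fin 3) ℝ)) *ᵥ η t) i) t := by
    intro t i
    have hTd : ∀ j : Fin 5 × Fin 3, HasDerivAt (fun s => T s i j)
        ((T t * ((1 : Matrix (Fin 5) (Fin 5) ℝ) ⊗ₖ skew (ω t))) i j) t := by
      intro j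
      have h1 : ∀ s, T s i j
          = (1 : Matrix (Fin 5) (Fin 5) ℝ) i.1 j.1 * R s i.2 j.2 := by
        intro s; rw [hT s]; rfl
      have h2 := (hR t i.2 j.2).const_mul ((1 : Matrix (Fin 5) (Fin 5) ℝ) i.1 j.1)
      have h3 : (T t * ((1 : Matrix (Fin 5) (Fin 5) ℝ) ⊗ₖ skew (ω t))) i j
          = (1 : Matrix (Fin 5) (Fin 5) ℝ) i.1 j.1 * (R t * skew (ω t)) i.2 j.2 := by
        rw [hT t, ← Matrix.mul_kronecker_mul, one_mul]
        rfl
      rw [h3]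
      exact h2.congr_of_eventuallyEq (Filter.Eventually.of_forall fun s => h1 s)
    have hterm : ∀ j : Fin 5 × Fin 3, HasDerivAt (fun s => T s i j * e s j)
        ((T t * ((1 : Matrix (Fin 5) (Fin 5) ℝ) ⊗ₖ skew (ω t))) i j * e t j
          + T t i j * (((A t - K * C) *ᵥ e t) j)) t :=
      fun j => (hTd j).mul (he t j)
    have hsum := HasDerivAt.fun_sum (u := Finset.univ) (fun j _ => hterm j)
    have hfun : (fun s => ∑ j : Fin 5 × Fin 3, T s i j * e s j) = fun s => η s i := by
      funext s; rw [hη s]; rfl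
    rw [hfun] at hsum
    have hKC : K * C = (Kb * Cb) ⊗ₖ (1 : Matrix (Fin 3) (Fin 3) ℝ) := by
      rw [hK, hC, ← Matrix.mul_kronecker_mul, one_mul]
    have hcomb : T t * ((1 : Matrix (Fin 5) (Fin 5) ℝ) ⊗ₖ skew (ω t)) + T t * (A t - K * C)
        = T t * ((Ab - Kb * Cb) ⊗ₖ (1 : Matrix (Fin 3) (Fin 3) ℝ)) := by
      rw [← mul_add, hA t, hS t, hKC, sub_kron]
      congr 1
      abel
    have hswap : T t * ((Ab - Kb * Cb) ⊗ₖ (1 : Matrix (Fin 3) (Fin 3) ℝ))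
        = ((Ab - Kb * Cb) ⊗ₖ (1 : Matrix (Fin 3) (Fin 3) ℝ)) * T t := by
      rw [hT t, ← Matrix.mul_kronecker_mul, ← Matrix.mul_kronecker_mul, one_mul, mul_one,
        one_mul, mul_one]
    have hval : ∑ j : Fin 5 × Fin 3,
        ((T t * ((1 : Matrix (Fin 5) (Fin 5) ℝ) ⊗ₖ skew (ω t))) i j * e t j
          + T t i j * (((A t - K * C) *ᵥ e t) j))
        = (((Ab - Kb * Cb) ⊗ₖ (1 : Matrix (Fin 3) (Fin 3) ℝ)) *ᵥ η t) i := by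
      rw [Finset.sum_add_distrib]
      have e1 : ∑ j : Fin 5 × Fin 3,
          (T t * ((1 : Matrix (Fin 5) (Fin 5) ℝ) ⊗ₖ skew (ω t))) i j * e t j
          = ((T t * ((1 : Matrix (Fin 5) (Fin 5) ℝ) ⊗ₖ skew (ω t))) *ᵥ e t) i := rfl
      have e2 : ∑ j : Fin 5 × Fin 3, T t i j * (((A t - K * C) *ᵥ e t) j)
          = (T t *ᵥ ((A t - K * C) *ᵥ e t)) i := rfl
      rw [e1, e2, Matrix.mulVec_mulVec]
      have hvec : (T t * ((1 : Matrix (Fin 5) (Fin 5) ℝ) ⊗ₖ skew (ω t))) *ᵥ e t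
            + (T t * (A t - K * C)) *ᵥ e t
          = ((Ab - Kb * Cb) ⊗ₖ (1 : Matrix (Fin 3) (Fin 3) ℝ)) *ᵥ η t := by
        rw [← Matrix.add_mulVec, hcomb, hswap, ← Matrix.mulVec_mulVec, ← hη t]
      exact congrFun hvec i
    rwa [hval] at hsum
  refine ⟨hdyn, fun hw => ?_⟩
  have hHM : ∀ μ : ℂ, μ ∈ spectrum ℂ
      ((((Ab - Kb * Cb) ⊗ₖ (1 : Matrix (Fin 3) (Fin 3) ℝ))).map (algebraMap ℝ ℂ)) → μ.re < 0 := by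
    intro μ hμ
    rw [mapC_kron] at hμ
    exact hw μ (spectrum_kron_one_subset _ μ hμ)
  obtain ⟨c, hc, lam, hlam, hdecay⟩ := real_decay _ hHM
  have hRb : ∀ t (a b : Fin 3), |R t a b| ≤ 1 := by
    intro t a b
    have h1 : (R t * (R t)ᵀ) a a = 1 := by rw [(hSO t).1]; simp [Matrix.one_apply]
    rw [Matrix.mul_apply] at h1
    have hterm : ∀ c' ∈ Finset.univ, (0:ℝ) ≤ R t a c' * (R t)ᵀ c' a := fun c' _ => by
      rw [Matrix.transpose_apply]; exact mul_self_nonneg _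
    have hle := Finset.single_le_sum hterm (Finset.mem_univ b)
    rw [h1] at hle
    rw [Matrix.transpose_apply] at hle
    rw [abs_le]
    constructor <;> nlinarith
  have hTb : ∀ t (i j : Fin 5 × Fin 3), |T t i j| ≤ 1 := by
    intro t i j
    rw [hT t]
    show |(1 : Matrix (Fin 5) (Fin 5) ℝ) i.1 j.1 * R t i.2 j.2| ≤ 1
    rw [Matrix.one_apply]
    split
    · rw [one_mul]; exact hRb t i.2 j.2
    · rw [zero_mul, abs_zero]; norm_num
  have hTtb : ∀ t (i j : Fin 5 × Fin 3), |(T t)ᵀ i j| ≤ 1 := fun t i j => by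
    rw [Matrix.transpose_apply]; exact hTb t j i
  have hTtrans : ∀ t, (T t)ᵀ = (1 : Matrix (Fin 5) (Fin 5) ℝ) ⊗ₖ (R t)ᵀ := by
    intro t
    rw [hT t]
    ext ⟨i1, i2⟩ ⟨j1, j2⟩
    simp [Matrix.transpose_apply, Matrix.kronecker_apply, Matrix.one_apply, eq_comm]
  have hTT : ∀ t, (T t)ᵀ * T t = 1 := by
    intro t
    rw [hTtrans t, hT t, ← Matrix.mul_kronecker_mul, one_mul, (hSO t).2.1,
      Matrix.one_kronecker_one]
  have he_eq : ∀ t, e t = (T t)ᵀ *ᵥ η t := by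
    intro t
    rw [hη t, Matrix.mulVec_mulVec, hTT t, Matrix.one_mulVec]
  have hηsol : ∀ t, η t
      = exp (t • ((Ab - Kb * Cb) ⊗ₖ (1 : Matrix (Fin 3) (Fin 3) ℝ))) *ᵥ η 0 :=
    fun t => ode_unique _ η hdyn t
  refine ⟨15 * 15 * c, by positivity, lam, hlam, fun t ht => ?_⟩
  rw [show -lam * t = -(lam * t) from by ring]
  have hcard : (Fintype.card (Fin 5 × Fin 3) : ℝ) = 15 := by simp
  calc ‖e t‖ = ‖(T t)ᵀ *ᵥ η t‖ := by rw [he_eq t]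
    _ ≤ 15 * ‖η t‖ := by
        have := mulVec_pi_norm_le ((T t)ᵀ) (hTtb t) (η t)
        rwa [hcard] at this
    _ ≤ 15 * (c * Real.exp (-(lam * t)) * ‖η 0‖) := by
        refine mul_le_mul_of_nonneg_left ?_ (by norm_num)
        rw [hηsol t]
        exact hdecay t ht (η 0)
    _ ≤ 15 * (c * Real.exp (-(lam * t)) * (15 * ‖e 0‖)) := by
        refine mul_le_mul_of_nonneg_left (mul_le_mul_of_nonneg_left ?_ (by positivity)) (by norm_num)
        have := mulVec_pi_norm_le (T 0) (hTb 0) (e 0)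
        rw [hcard] at this
        rw [hη 0]
        exact this
    _ = 15 * 15 * c * Real.exp (-(lam * t)) * ‖e 0‖ := by ring
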